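/- Let X be a normed space and T a continuous linear operator with ‖Tx‖ ≤ λ‖x‖ for all x and some λ ∈ (0,1). Then CR(T) = {0}; in particular, a proper contraction on a nonzero normed space is not chain recurrent. The same conclusion holds if T is invertible and ‖Tx‖ ≥ λ‖x‖ for all x with some λ > 1. -/

import Mathlib

/-- A δ-chain (of positive length) for a map T from x to y in a normed space. -/
def IsDeltaChain {X : Type*} [NormedAddCommGroup X] (T : X → X) (δ : ℝ) (x y : X) : Prop :=
  ∃ (k : ℕ) (c : ℕ → X), 1 ≤ k ∧ c 0 = x ∧ c k = y ∧ ∀ j < k, ‖T (c j) - c (j + 1)‖ ≤ δ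

lemma chain_contraction_aux {X : Type*} [NormedAddCommGroup X] (f : X → X) (l : ℝ)
    (hl0 : 0 < l) (hl1 : l < 1) (hb : ∀ a, ‖f a‖ ≤ l * ‖a‖) (x : X)
    (hx : ∀ δ > (0 : ℝ), IsDeltaChain f δ x x) : x = 0 := by
  have h1l : (0:ℝ) < 1 - l := by linarith
  rw [← norm_eq_zero]
  have key : ∀ ε > (0:ℝ), ‖x‖ ≤ 0 + ε := by
    intro ε hε
    set δ := ε * (1 - l) ^ 2 with hδdef
    have hδ : 0 < δ := by positivity
    obtain ⟨k, c, hk, hc0, hck, hch⟩ := hx δ hδ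
    have bound : ∀ j ≤ k, ‖c j‖ ≤ l ^ j * ‖x‖ + δ / (1 - l) := by
      intro j hj
      induction j with
      | zero => simp [hc0]; positivity
      | succ n ih =>
        have hn : n ≤ k := by omega
        have hnk : n < k := by omega
        have ihn := ih hn
        have h1 : ‖c (n+1)‖ ≤ ‖f (c n) - c (n+1)‖ + ‖f (c n)‖ := by
          calc ‖c (n+1)‖ = ‖(c (n+1) - f (c n)) + f (c n)‖ := by rw [sub_add_cancel]
            _ ≤ ‖c (n+1) - f (c n)‖ + ‖f (c n)‖ := norm_add_le _ _
            _ = ‖f (c n) - c (n+1)‖ + ‖f (c n)‖ := by rw [norm_sub_rev]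
        have h2 : ‖f (c n)‖ ≤ l * ‖c n‖ := hb _
        have h3 : ‖f (c n) - c (n+1)‖ ≤ δ := hch n hnk
        have h4 : l * ‖c n‖ ≤ l * (l ^ n * ‖x‖ + δ / (1 - l)) :=
          mul_le_mul_of_nonneg_left ihn hl0.le
        have : ‖c (n+1)‖ ≤ δ + l * (l ^ n * ‖x‖ + δ / (1 - l)) := by linarith
        have heq : δ + l * (l ^ n * ‖x‖ + δ / (1 - l)) = l ^ (n+1) * ‖x‖ + δ / (1 - l) := by
          field_simp
          ring
        linarith [heq ▸ this]
    have hkb := bound k le_rfl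
    rw [hck] at hkb
    have hpow : l ^ k ≤ l := by
      have := pow_le_pow_of_le_one hl0.le hl1.le hk
      simpa using this
    have hxl : ‖x‖ ≤ l * ‖x‖ + δ / (1 - l) := by
      nlinarith [norm_nonneg x]
    have : (1 - l) * ‖x‖ ≤ δ / (1 - l) := by linarith
    have hδval : δ / (1 - l) = ε * (1 - l) := by
      rw [hδdef]; field_simp
    rw [hδval] at this
    have := (mul_le_mul_iff_right₀ h1l).mp (by linarith : (1 - l) * ‖x‖ ≤ (1 - l) * ε)
    linarith
  have := le_of_forall_pos_le_add key
  linarith [norm_nonneg x]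

/-- A proper contraction (or an invertible proper dilation) on a normed space has trivial
chain recurrent set. -/
theorem stmt16 {𝕜 X : Type*} [NontriviallyNormedField 𝕜] [NormedAddCommGroup X]
    [NormedSpace 𝕜 X] (T : X →L[𝕜] X)
    (h : (∃ l : ℝ, 0 < l ∧ l < 1 ∧ ∀ x : X, ‖T x‖ ≤ l * ‖x‖) ∨
         ((∃ S : X →L[𝕜] X, (∀ x, S (T x) = x) ∧ ∀ x, T (S x) = x) ∧
          ∃ l : ℝ, 1 < l ∧ ∀ x : X, l * ‖x‖ ≤ ‖T x‖)) :
    {x : X | ∀ δ > (0 : ℝ), IsDeltaChain (⇑T) δ x x} = {0} := by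
  ext x
  simp only [Set.mem_setOf_eq, Set.mem_singleton_iff]
  constructor
  · intro hx
    rcases h with ⟨l, hl0, hl1, hb⟩ | ⟨⟨S, hST, hTS⟩, l, hl1, hb⟩
    · exact chain_contraction_aux (⇑T) l hl0 hl1 hb x hx
    · have hl0 : (0:ℝ) < l := by linarith
      have hSb : ∀ a, ‖S a‖ ≤ l⁻¹ * ‖a‖ := by
        intro a
        have := hb (S a)
        rw [hTS a] at this
        rw [inv_mul_eq_div, le_div_iff₀ hl0]
        linarith [this]
      have hSchain : ∀ δ > (0:ℝ), IsDeltaChain (⇑S) δ x x := by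
        intro δ hδ
        obtain ⟨k, c, hk, hc0, hck, hch⟩ := hx δ hδ
        refine ⟨k, fun j => c (k - j), hk, by simp [hck], by simp [hc0], ?_⟩
        intro j hj
        have hi : k - j = (k - j - 1) + 1 := by omega
        set i := k - j - 1 with hidef
        have hik : i < k := by omega
        have h1 : S (c (k - j)) - c (k - (j+1)) = S (c (i+1) - T (c i)) := by
          rw [map_sub, hST]
          have : k - (j+1) = i := by omega
          rw [hi, this]
        rw [h1]
        calc ‖S (c (i+1) - T (c i))‖ ≤ l⁻¹ * ‖c (i+1) - T (c i)‖ := hSb _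
          _ ≤ 1 * δ := by
              apply mul_le_mul
              · rw [inv_le_one_iff₀]; right; linarith
              · rw [norm_sub_rev]; exact hch i hik
              · positivity
              · norm_num
          _ = δ := one_mul δ
      exact chain_contraction_aux (⇑S) l⁻¹ (by positivity)
        ((inv_lt_one_iff₀).mpr (Or.inr hl1)) hSb x hSchain
  · rintro rfl
    intro δ hδ
    exact ⟨1, fun _ => 0, le_rfl, rfl, rfl, fun j _ => by simp; linarith⟩
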